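/- Formal Taylor recursion for the parameterization: if P(θ) = Σ_{|α|≥0} a_α θ^α is a formal power series solution of the invariance PDE Σ_k λ_k θ_k ∂P/∂θ_k = g(P(θ)), then the coefficients satisfy (α·λ) a_α = (g(a))_α for every multi-index α, where (g(a))_α is the α-th Taylor coefficient of g∘P. If moreover the eigenvalues λ_1,...,λ_m are non-resonant (α·λ ≠ λ_j for all j and all |α| ≥ 2), then for each |α| ≥ 2 the coefficient a_α is uniquely determined by the lower-order coefficients via a_α = (α·λ − Dg(x̃))^{-1} · (nonlinear terms depending only on a_β with |β| < |α|). -/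

import Mathlib

open MvPowerSeries Matrix

namespace Stmt15Aux

def deg {m : ℕ} (α : Fin m →₀ ℕ) : ℕ := α.sum fun _ e => e

lemma deg_add {m : ℕ} (β γ : Fin m →₀ ℕ) : deg (β + γ) = deg β + deg γ :=
  Finsupp.sum_add_index' (fun _ => rfl) (fun _ _ _ => rfl)

lemma deg_zero {m : ℕ} : deg (0 : Fin m →₀ ℕ) = 0 := by simp [deg]

lemma eq_zero_of_deg_eq_zero {m : ℕ} {β : Fin m →₀ ℕ} (h : deg β = 0) : β = 0 := by
  ext i
  rw [deg, Finsupp.sum, Finset.sum_eq_zero_iff] at h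
  by_cases hi : i ∈ β.support
  · exact h i hi
  · simpa using Finsupp.notMem_support_iff.mp hi

lemma coeff_zero_aeval {m n : ℕ} {P : Fin n → MvPowerSeries (Fin m) ℝ} {xt : Fin n → ℝ}
    (hP0 : ∀ j, MvPowerSeries.coeff 0 (P j) = xt j) (p : MvPolynomial (Fin n) ℝ) :
    MvPowerSeries.coeff 0 (MvPolynomial.aeval P p) = MvPolynomial.eval xt p := by
  induction p using MvPolynomial.induction_on with
  | C a => simp [MvPowerSeries.coeff_zero_eq_constantCoeff, MvPowerSeries.algebraMap_apply]
  | add p q hp hq => simp [map_add, hp, hq]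
  | mul_X p i hp =>
      have hmul : (MvPolynomial.aeval P) (p * MvPolynomial.X i) = (MvPolynomial.aeval P) p * P i := by
        rw [_root_.map_mul, MvPolynomial.aeval_X]
      rw [hmul]
      simp only [MvPowerSeries.coeff_zero_eq_constantCoeff, _root_.map_mul]
      simp only [← MvPowerSeries.coeff_zero_eq_constantCoeff]
      rw [hp, hP0]
      simp [MvPolynomial.eval_mul]

lemma lowAgree {m n : ℕ} {s : ℕ} {P Q : Fin n → MvPowerSeries (Fin m) ℝ}
    (h : ∀ β : Fin m →₀ ℕ, deg β < s → ∀ j,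
      MvPowerSeries.coeff β (Q j) = MvPowerSeries.coeff β (P j))
    (p : MvPolynomial (Fin n) ℝ) :
    ∀ γ : Fin m →₀ ℕ, deg γ < s →
      MvPowerSeries.coeff γ (MvPolynomial.aeval Q p)
        = MvPowerSeries.coeff γ (MvPolynomial.aeval P p) := by
  induction p using MvPolynomial.induction_on with
  | C a => intro γ _; simp [MvPolynomial.aeval_C]
  | add p q hp hq => intro γ hγ; simp only [map_add]; rw [hp γ hγ, hq γ hγ]
  | mul_X p i hp =>
      intro γ hγ
      have hmQ : (MvPolynomial.aeval Q) (p * MvPolynomial.X i) = (MvPolynomial.aeval Q) p * Q i := by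
        rw [_root_.map_mul, MvPolynomial.aeval_X]
      have hmP : (MvPolynomial.aeval P) (p * MvPolynomial.X i) = (MvPolynomial.aeval P) p * P i := by
        rw [_root_.map_mul, MvPolynomial.aeval_X]
      rw [hmQ, hmP, MvPowerSeries.coeff_mul, MvPowerSeries.coeff_mul]
      refine Finset.sum_congr rfl fun x hx => ?_
      rw [Finset.HasAntidiagonal.mem_antidiagonal] at hx
      have hd : deg x.1 + deg x.2 = deg γ := by rw [← deg_add, hx]
      rw [hp x.1 (by omega), h x.2 (by omega)]

lemma linDiff {m n : ℕ} {s : ℕ} (hs : 1 ≤ s) {P Q : Fin n → MvPowerSeries (Fin m) ℝ}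
    {xt : Fin n → ℝ}
    (h : ∀ β : Fin m →₀ ℕ, deg β < s → ∀ j,
      MvPowerSeries.coeff β (Q j) = MvPowerSeries.coeff β (P j))
    (hP0 : ∀ j, MvPowerSeries.coeff 0 (P j) = xt j)
    (p : MvPolynomial (Fin n) ℝ) (α : Fin m →₀ ℕ) (hα : deg α = s) :
    MvPowerSeries.coeff α (MvPolynomial.aeval Q p)
      - MvPowerSeries.coeff α (MvPolynomial.aeval P p)
      = ∑ k, MvPolynomial.eval xt (MvPolynomial.pderiv k p) *
          (MvPowerSeries.coeff α (Q k) - MvPowerSeries.coeff α (P k)) := by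
  have hQ0 : ∀ j, MvPowerSeries.coeff 0 (Q j) = xt j := fun j => by
    rw [h 0 (by rw [deg_zero]; omega) j, hP0]
  have hα0 : α ≠ 0 := fun h0 => by rw [h0, deg_zero] at hα; omega
  induction p using MvPolynomial.induction_on with
  | C a => simp
  | add p q hp hq =>
      have : MvPowerSeries.coeff α (MvPolynomial.aeval Q (p + q))
          - MvPowerSeries.coeff α (MvPolynomial.aeval P (p + q))
          = (MvPowerSeries.coeff α (MvPolynomial.aeval Q p)
              - MvPowerSeries.coeff α (MvPolynomial.aeval P p))
          + (MvPowerSeries.coeff α (MvPolynomial.aeval Q q)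
              - MvPowerSeries.coeff α (MvPolynomial.aeval P q)) := by
        simp only [map_add]; ring
      rw [this, hp, hq, ← Finset.sum_add_distrib]
      refine Finset.sum_congr rfl fun k _ => ?_
      simp only [map_add, MvPolynomial.eval_add]; ring
  | mul_X p i hp =>
      have hpair : ((0 : Fin m →₀ ℕ), α) ≠ (α, (0 : Fin m →₀ ℕ)) := by
        intro hE
        exact hα0 ((Prod.mk.injEq _ _ _ _ ▸ hE).1.symm ▸ rfl)
      have hsub : ({((0 : Fin m →₀ ℕ), α), (α, (0 : Fin m →₀ ℕ))} : Finset _)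
          ⊆ Finset.HasAntidiagonal.antidiagonal α := by
        intro x hx
        rcases Finset.mem_insert.mp hx with h1 | h1
        · subst h1; simp [Finset.HasAntidiagonal.mem_antidiagonal]
        · rw [Finset.mem_singleton] at h1; subst h1; simp [Finset.HasAntidiagonal.mem_antidiagonal]
      have hmQ : (MvPolynomial.aeval Q) (p * MvPolynomial.X i) = (MvPolynomial.aeval Q) p * Q i := by
        rw [_root_.map_mul, MvPolynomial.aeval_X]
      have hmP : (MvPolynomial.aeval P) (p * MvPolynomial.X i) = (MvPolynomial.aeval P) p * P i := by
        rw [_root_.map_mul, MvPolynomial.aeval_X]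
      rw [hmQ, hmP, MvPowerSeries.coeff_mul, MvPowerSeries.coeff_mul, ← Finset.sum_sub_distrib]
      rw [← Finset.sum_subset hsub ?_]
      · rw [Finset.sum_pair hpair]
        have hA0 : MvPowerSeries.coeff 0 (MvPolynomial.aeval Q p) = MvPolynomial.eval xt p :=
          coeff_zero_aeval hQ0 p
        have hB0 : MvPowerSeries.coeff 0 (MvPolynomial.aeval P p) = MvPolynomial.eval xt p :=
          coeff_zero_aeval hP0 p
        simp only [hA0, hB0, hQ0 i, hP0 i]
        have hrw : MvPowerSeries.coeff α (MvPolynomial.aeval Q p) * xt i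
            - MvPowerSeries.coeff α (MvPolynomial.aeval P p) * xt i
            = (∑ k, MvPolynomial.eval xt (MvPolynomial.pderiv k p) *
                (MvPowerSeries.coeff α (Q k) - MvPowerSeries.coeff α (P k))) * xt i := by
          rw [← sub_mul, hp]
        have hRHS : ∑ k, MvPolynomial.eval xt (MvPolynomial.pderiv k (p * MvPolynomial.X i)) *
              (MvPowerSeries.coeff α (Q k) - MvPowerSeries.coeff α (P k))
            = (∑ k, MvPolynomial.eval xt (MvPolynomial.pderiv k p) *
                (MvPowerSeries.coeff α (Q k) - MvPowerSeries.coeff α (P k))) * xt i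
              + MvPolynomial.eval xt p *
                (MvPowerSeries.coeff α (Q i) - MvPowerSeries.coeff α (P i)) := by
          have hsingle : MvPolynomial.eval xt p *
                (MvPowerSeries.coeff α (Q i) - MvPowerSeries.coeff α (P i))
              = ∑ k, (if k = i then MvPolynomial.eval xt p *
                  (MvPowerSeries.coeff α (Q k) - MvPowerSeries.coeff α (P k)) else 0) := by
            rw [Finset.sum_ite_eq' Finset.univ i]
            simp
          rw [Finset.sum_mul, hsingle, ← Finset.sum_add_distrib]
          refine Finset.sum_congr rfl fun k _ => ?_
          by_cases hk : k = i
          · subst hk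
            rw [MvPolynomial.pderiv_mul, MvPolynomial.pderiv_X_self]
            simp only [MvPolynomial.eval_add, MvPolynomial.eval_mul, MvPolynomial.eval_X,
              mul_one, if_pos rfl, if_true]
            ring
          · rw [MvPolynomial.pderiv_mul, MvPolynomial.pderiv_X_of_ne (by simpa using Ne.symm hk)]
            simp only [MvPolynomial.eval_add, MvPolynomial.eval_mul, MvPolynomial.eval_X,
              MvPolynomial.eval_zero, mul_zero, add_zero, if_neg hk]
            ring
        rw [hRHS, hrw]
        ring
      · intro x hxad hxne
        rw [Finset.HasAntidiagonal.mem_antidiagonal] at hxad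
        have hx1 : x.1 ≠ 0 := by
          intro h1
          apply hxne
          rw [Finset.mem_insert]
          left
          have : x.2 = α := by rw [← hxad, h1, zero_add]
          rw [← h1, ← this]
        have hx1' : x.1 ≠ α := by
          intro h1
          apply hxne
          rw [Finset.mem_insert, Finset.mem_singleton]
          right
          have : x.2 = 0 := by
            have := hxad
            rw [h1] at this
            nth_rewrite 2 [← add_zero α] at this
            exact add_left_cancel this
          rw [← h1, ← this]
        have hd : deg x.1 + deg x.2 = s := by rw [← deg_add, hxad, hα]
        have hd1 : 1 ≤ deg x.1 := by
          rcases Nat.eq_zero_or_pos (deg x.1) with h1 | h1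
          · exact absurd (eq_zero_of_deg_eq_zero h1) hx1
          · omega
        have hd2 : 1 ≤ deg x.2 := by
          rcases Nat.eq_zero_or_pos (deg x.2) with h1 | h1
          · exfalso
            apply hx1'
            rw [eq_zero_of_deg_eq_zero h1] at hxad
            rw [← hxad, add_zero]
          · omega
        rw [lowAgree h p x.1 (by omega), h x.2 (by omega)]
        ring

end Stmt15Aux


open MvPowerSeries Matrix

/-- The formal Euler-type operator `Σ_k λ_k θ_k ∂/∂θ_k` acting on formal
power series; on each monomial `θ^α` it acts by multiplication by
`α·λ = Σ_k α_k λ_k`. -/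
noncomputable def eulerOp {m : ℕ} (lam : Fin m → ℝ)
    (f : MvPowerSeries (Fin m) ℝ) : MvPowerSeries (Fin m) ℝ :=
  fun α => (∑ i, (α i : ℝ) * lam i) * MvPowerSeries.coeff α f

theorem stmt_15 {m n : ℕ}
    (lam : Fin m → ℝ) (hlamneg : ∀ k, lam k < 0)
    (g : Fin n → MvPolynomial (Fin n) ℝ)
    (xt : Fin n → ℝ) (hxt : ∀ j, MvPolynomial.eval xt (g j) = 0)
    (J : Matrix (Fin n) (Fin n) ℝ)
    (hJ : ∀ i j, J i j = MvPolynomial.eval xt (MvPolynomial.pderiv j (g i)))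
    (μ : Fin n → ℝ) (C : Matrix (Fin n) (Fin n) ℝ) (hC : IsUnit C)
    (hdiag : J = C * Matrix.diagonal μ * C⁻¹)
    (hμdist : Function.Injective μ) (hμnz : ∀ i, μ i ≠ 0)
    (ι : Fin m ↪ Fin n) (hι : ∀ k, μ (ι k) = lam k)
    (hstable : ∀ i, μ i < 0 → ∃ k, ι k = i)
    (hNR : ∀ α : Fin m →₀ ℕ, 2 ≤ α.sum (fun _ e => e) →
      ∀ k, (∑ i, (α i : ℝ) * lam i) ≠ lam k)
    (P : Fin n → MvPowerSeries (Fin m) ℝ)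
    (hP0 : ∀ j, MvPowerSeries.coeff 0 (P j) = xt j)
    (hPDE : ∀ j, eulerOp lam (P j) = MvPolynomial.aeval P (g j)) :
    (∀ j, ∀ α : Fin m →₀ ℕ,
        (∑ i, (α i : ℝ) * lam i) * MvPowerSeries.coeff α (P j) =
          MvPowerSeries.coeff α (MvPolynomial.aeval P (g j))) ∧
    (∀ α : Fin m →₀ ℕ, 2 ≤ α.sum (fun _ e => e) →
        IsUnit ((∑ i, (α i : ℝ) * lam i) • (1 : Matrix (Fin n) (Fin n) ℝ) - J)) ∧
    (∀ α : Fin m →₀ ℕ, 2 ≤ α.sum (fun _ e => e) →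
        (fun j => MvPowerSeries.coeff α (P j)) =
          ((∑ i, (α i : ℝ) * lam i) • (1 : Matrix (Fin n) (Fin n) ℝ) - J)⁻¹ *ᵥ
            (fun j => MvPowerSeries.coeff α (MvPolynomial.aeval P (g j))
              - (J *ᵥ fun j' => MvPowerSeries.coeff α (P j')) j)) ∧
    (∀ Q : Fin n → MvPowerSeries (Fin m) ℝ,
        (∀ j, eulerOp lam (Q j) = MvPolynomial.aeval Q (g j)) →
        (∀ α : Fin m →₀ ℕ, α.sum (fun _ e => e) ≤ 1 →
          ∀ j, MvPowerSeries.coeff α (Q j) = MvPowerSeries.coeff α (P j)) →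
        Q = P) := by
  classical
  open Stmt15Aux in
  -- Part 1
  have part1 : ∀ j, ∀ α : Fin m →₀ ℕ,
      (∑ i, (α i : ℝ) * lam i) * MvPowerSeries.coeff α (P j) =
        MvPowerSeries.coeff α (MvPolynomial.aeval P (g j)) := by
    intro j α
    have := congrFun (hPDE j) α
    exact this
  -- c < 0 for |α| ≥ 2
  have hcneg : ∀ α : Fin m →₀ ℕ, 2 ≤ Stmt15Aux.deg α → (∑ i, (α i : ℝ) * lam i) < 0 := by
    intro α hα
    have hα0 : α ≠ 0 := fun h0 => by
      rw [h0, Stmt15Aux.deg_zero] at hα; omega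
    obtain ⟨i0, hi0⟩ : ∃ i, α i ≠ 0 := by
      by_contra hcon
      push_neg at hcon
      exact hα0 (Finsupp.ext hcon)
    calc (∑ i, (α i : ℝ) * lam i) < ∑ _i : Fin m, (0:ℝ) := by
          refine Finset.sum_lt_sum (fun i _ => ?_) ⟨i0, Finset.mem_univ _, ?_⟩
          · exact mul_nonpos_of_nonneg_of_nonpos (by positivity) (le_of_lt (hlamneg i))
          · exact mul_neg_of_pos_of_neg (by exact_mod_cast Nat.pos_of_ne_zero hi0) (hlamneg i0)
      _ = 0 := by simp
  have hCdet : IsUnit C.det := (Matrix.isUnit_iff_isUnit_det C).mp hC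
  -- conjugation identity
  have hconj : ∀ c : ℝ, c • (1 : Matrix (Fin n) (Fin n) ℝ) - J
      = C * Matrix.diagonal (fun i => c - μ i) * C⁻¹ := by
    intro c
    have h1 : c • (1 : Matrix (Fin n) (Fin n) ℝ)
        = C * (c • (1 : Matrix (Fin n) (Fin n) ℝ)) * C⁻¹ := by
      rw [Matrix.mul_smul, Matrix.mul_one, Matrix.smul_mul, Matrix.mul_nonsing_inv C hCdet]
    rw [hdiag, h1, ← Matrix.sub_mul, ← Matrix.mul_sub]
    congr 1
    congr 1
    rw [Matrix.smul_one_eq_diagonal, Matrix.diagonal_sub]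
  -- Part 2
  have part2 : ∀ α : Fin m →₀ ℕ, 2 ≤ α.sum (fun _ e => e) →
      IsUnit ((∑ i, (α i : ℝ) * lam i) • (1 : Matrix (Fin n) (Fin n) ℝ) - J) := by
    intro α hα
    set c := ∑ i, (α i : ℝ) * lam i with hc
    have hcμ : ∀ i, c - μ i ≠ 0 := by
      intro i
      rcases lt_trichotomy (μ i) 0 with hμ | hμ | hμ
      · obtain ⟨k, hk⟩ := hstable i hμ
        have : μ i = lam k := by rw [← hk, hι]
        rw [this]
        exact sub_ne_zero_of_ne (hNR α hα k)
      · exact absurd hμ (hμnz i)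
      · have := hcneg α hα
        intro hE
        have : c = μ i := by linarith [sub_eq_zero.mp hE]
        linarith
    rw [Matrix.isUnit_iff_isUnit_det, hconj c, Matrix.det_conj hC, Matrix.det_diagonal]
    rw [isUnit_iff_ne_zero]
    exact Finset.prod_ne_zero_iff.mpr fun i _ => hcμ i
  refine ⟨part1, part2, ?_, ?_⟩
  · -- Part 3
    intro α hα
    set c := ∑ i, (α i : ℝ) * lam i with hc
    set M := c • (1 : Matrix (Fin n) (Fin n) ℝ) - J with hM
    have hMunit : IsUnit M := part2 α hα
    have hMdet : IsUnit M.det := (Matrix.isUnit_iff_isUnit_det M).mp hMunit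
    have hvec : (fun j => MvPowerSeries.coeff α (MvPolynomial.aeval P (g j))
        - (J *ᵥ fun j' => MvPowerSeries.coeff α (P j')) j)
        = M *ᵥ (fun j => MvPowerSeries.coeff α (P j)) := by
      funext j
      rw [hM, Matrix.sub_mulVec, Matrix.smul_mulVec, Matrix.one_mulVec]
      simp only [Pi.sub_apply, Pi.smul_apply, smul_eq_mul]
      rw [← part1 j α]
    rw [hvec, Matrix.mulVec_mulVec, Matrix.nonsing_inv_mul M hMdet, Matrix.one_mulVec]
  · -- Part 4: uniqueness
    intro Q hQPDE hQlow
    have key : ∀ s : ℕ, ∀ α : Fin m →₀ ℕ, Stmt15Aux.deg α = s → ∀ j,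
        MvPowerSeries.coeff α (Q j) = MvPowerSeries.coeff α (P j) := by
      intro s
      induction s using Nat.strong_induction_on with
      | _ s IH =>
        intro α hαs j
        by_cases hs2 : s ≤ 1
        · exact hQlow α (by rw [show α.sum (fun _ e => e) = Stmt15Aux.deg α from rfl, hαs]; exact hs2) j
        push_neg at hs2
        have hs2' : 2 ≤ s := hs2
        have hlow : ∀ β : Fin m →₀ ℕ, Stmt15Aux.deg β < s → ∀ j',
            MvPowerSeries.coeff β (Q j') = MvPowerSeries.coeff β (P j') :=
          fun β hβ => IH (Stmt15Aux.deg β) hβ β rfl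
        set c := ∑ i, (α i : ℝ) * lam i with hc
        set D : Fin n → ℝ :=
          fun k => MvPowerSeries.coeff α (Q k) - MvPowerSeries.coeff α (P k) with hD
        have hα2 : 2 ≤ α.sum (fun _ e => e) := by
          rw [show α.sum (fun _ e => e) = Stmt15Aux.deg α from rfl, hαs]; exact hs2'
        set M := c • (1 : Matrix (Fin n) (Fin n) ℝ) - J with hM
        have hMunit : IsUnit M := part2 α hα2
        have hMdet : IsUnit M.det := (Matrix.isUnit_iff_isUnit_det M).mp hMunit
        have hQc : ∀ j', c * MvPowerSeries.coeff α (Q j')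
            = MvPowerSeries.coeff α (MvPolynomial.aeval Q (g j')) :=
          fun j' => congrFun (hQPDE j') α
        have hMD : M *ᵥ D = 0 := by
          funext j'
          rw [hM, Matrix.sub_mulVec, Matrix.smul_mulVec, Matrix.one_mulVec]
          simp only [Pi.sub_apply, Pi.smul_apply, smul_eq_mul, Pi.zero_apply]
          have hlin := Stmt15Aux.linDiff (s := s) (by omega) hlow hP0 (g j') α hαs
          have hJrow : ∀ k, MvPolynomial.eval xt (MvPolynomial.pderiv k (g j')) = J j' k :=
            fun k => (hJ j' k).symm
          have hcD : c * D j' = ∑ k, J j' k * D k := by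
            have : c * D j' = MvPowerSeries.coeff α (MvPolynomial.aeval Q (g j'))
                - MvPowerSeries.coeff α (MvPolynomial.aeval P (g j')) := by
              rw [hD]
              simp only [mul_sub]
              rw [hQc j', part1 j' α]
            rw [this, hlin]
            exact Finset.sum_congr rfl fun k _ => by rw [hJrow k]
          show c * D j' - (J *ᵥ D) j' = 0
          rw [hcD, show (J *ᵥ D) j' = ∑ k, J j' k * D k from rfl, sub_self]
        have hDzero : D = 0 := by
          have h2 := congrArg (fun v => M⁻¹ *ᵥ v) hMD
          simpa [Matrix.mulVec_mulVec, Matrix.nonsing_inv_mul M hMdet, Matrix.one_mulVec,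
            Matrix.mulVec_zero] using h2
        have := congrFun hDzero j
        simpa [hD, sub_eq_zero] using this
    funext j
    ext α
    exact key (Stmt15Aux.deg α) α rfl j
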